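/- arXiv:2204.13866 — 3 statements merged into one kernel-verified Lean document; each statement's English description precedes it below -/
import Mathlib

section
/- Fix constants 0 < b < √(2π) and a, c, T > 0. There exists ε₀ > 0 (depending only on b, c and T) such that for all ε ∈ (0, ε₀) the following holds: if f : [0,T] → [0,∞) is a function such that for all t ∈ [0,T], f(t) ≤ a + (b²/log(ε⁻¹)) ∫₀ᵗ f(s) · min(1/(4π(t−s)), c/ε²) ds, then f(t) ≤ a·C for all t ∈ [0,T], where C > 0 is a constant depending only on b. -/
open MeasureTheory Real Set
set_option maxHeartbeats 1000000

lemma kmeas (r A : ℝ) : Measurable fun s : ℝ => min ((4*π*(r-s))⁻¹) A :=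
  (((measurable_const.sub measurable_id).const_mul (4*π)).inv).min measurable_const

lemma kint {t A : ℝ} (hA : 0 ≤ A) {u v : ℝ} (hu : u ≤ t) (hv : v ≤ t) :
    IntervalIntegrable (fun s => min ((4*π*(t-s))⁻¹) A) volume u v := by
  apply (intervalIntegrable_const (c := A)).mono_fun'
    ((kmeas t A).aestronglyMeasurable)
  refine (ae_restrict_iff' measurableSet_uIoc).2 (Filter.Eventually.of_forall fun s hs => ?_)
  have hst : s ≤ t := hs.2.trans (max_le hu hv)
  have h1 : (0:ℝ) ≤ (4*π*(t-s))⁻¹ := by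
    have hπ := Real.pi_pos
    have : (0:ℝ) ≤ 4*π*(t-s) := by nlinarith
    positivity
  have h2 : (0:ℝ) ≤ min ((4*π*(t-s))⁻¹) A := le_min h1 hA
  dsimp only
  rw [Real.norm_eq_abs, abs_of_nonneg h2]
  exact min_le_right _ _

lemma kernel_bound {c ε T t : ℝ} (hc : 0 < c) (hε : 0 < ε) (hT : 0 < T)
    (ht0 : 0 ≤ t) (htT : t ≤ T) :
    ∫ s in (0:ℝ)..t, min ((4*π*(t-s))⁻¹) (c/ε^2)
      ≤ (1 + max (Real.log (4*π*c*T/ε^2)) 0) / (4*π) := by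
  have hπ : (0:ℝ) < π := Real.pi_pos
  have h4π : (0:ℝ) < 4*π := by positivity
  set A := c/ε^2 with hA
  have hA0 : 0 < A := by rw [hA]; positivity
  set u₀ := ε^2/(4*π*c) with hu₀def
  have hu₀ : 0 < u₀ := by rw [hu₀def]; positivity
  have hu₀A : u₀ * A = (4*π)⁻¹ := by
    rw [hu₀def, hA]; field_simp
  have hmax0 : (0:ℝ) ≤ max (Real.log (4*π*c*T/ε^2)) 0 := le_max_right _ _
  rcases le_or_gt t u₀ with h | h
  · calc ∫ s in (0:ℝ)..t, min ((4*π*(t-s))⁻¹) A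
        ≤ ∫ s in (0:ℝ)..t, A :=
          intervalIntegral.integral_mono_on ht0 (kint hA0.le (by linarith) (le_refl t))
            intervalIntegrable_const (fun s _ => min_le_right _ _)
      _ = t * A := by rw [intervalIntegral.integral_const, smul_eq_mul, sub_zero]
      _ ≤ u₀ * A := mul_le_mul_of_nonneg_right h hA0.le
      _ = (4*π)⁻¹ := hu₀A
      _ ≤ (1 + max (Real.log (4*π*c*T/ε^2)) 0) / (4*π) := by
          rw [inv_eq_one_div]; gcongr; linarith
  · set s₁ := t - u₀ with hs₁def
    have hs₁0 : 0 < s₁ := by rw [hs₁def]; linarith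
    have hs₁t : s₁ < t := by rw [hs₁def]; linarith
    have ht0' : 0 < t := lt_trans hu₀ h
    have I1 : IntervalIntegrable (fun s => min ((4*π*(t-s))⁻¹) A) volume 0 s₁ :=
      kint hA0.le (by linarith) hs₁t.le
    have I2 : IntervalIntegrable (fun s => min ((4*π*(t-s))⁻¹) A) volume s₁ t :=
      kint hA0.le hs₁t.le (le_refl t)
    have hsplit : ∫ s in (0:ℝ)..t, min ((4*π*(t-s))⁻¹) A
        = (∫ s in (0:ℝ)..s₁, min ((4*π*(t-s))⁻¹) A)
          + ∫ s in s₁..t, min ((4*π*(t-s))⁻¹) A :=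
      (intervalIntegral.integral_add_adjacent_intervals I1 I2).symm
    have hpart2 : ∫ s in s₁..t, min ((4*π*(t-s))⁻¹) A ≤ (4*π)⁻¹ := by
      calc ∫ s in s₁..t, min ((4*π*(t-s))⁻¹) A
          ≤ ∫ s in s₁..t, A :=
            intervalIntegral.integral_mono_on hs₁t.le I2 intervalIntegrable_const
              (fun s _ => min_le_right _ _)
        _ = (t - s₁) * A := by rw [intervalIntegral.integral_const, smul_eq_mul]
        _ = (4*π)⁻¹ := by rw [hs₁def, show t - (t - u₀) = u₀ by ring]; exact hu₀A
    have hcont : ContinuousOn (fun s : ℝ => (t-s)⁻¹) (Set.uIcc 0 s₁) := by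
      apply ContinuousOn.inv₀ ((continuous_const.sub continuous_id).continuousOn)
      intro x hx
      rw [Set.uIcc_of_le hs₁0.le] at hx
      have hxs : x ≤ s₁ := hx.2
      intro hc0
      rw [Pi.sub_apply, sub_eq_zero] at hc0
      simp only [id_eq] at hc0
      linarith
    have Iinv : IntervalIntegrable (fun s : ℝ => (t-s)⁻¹) volume 0 s₁ :=
      hcont.intervalIntegrable
    have Iinv4 : IntervalIntegrable (fun s : ℝ => (4*π*(t-s))⁻¹) volume 0 s₁ := by
      have heq : (fun s : ℝ => (4*π*(t-s))⁻¹) = fun s : ℝ => (4*π)⁻¹ * (t-s)⁻¹ := by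
        funext s; rw [mul_inv]
      rw [heq]; exact Iinv.const_mul _
    have hval : ∫ s in (0:ℝ)..s₁, (t-s)⁻¹ = Real.log (t/u₀) := by
      have h1 : ∫ s in (0:ℝ)..s₁, (t-s)⁻¹
          = ∫ x in (t - s₁)..(t - 0), x⁻¹ :=
        intervalIntegral.integral_comp_sub_left (fun u => u⁻¹) t
      rw [h1, show t - s₁ = u₀ by rw [hs₁def]; ring, sub_zero]
      apply integral_inv
      rw [Set.mem_uIcc]; push_neg
      constructor
      · intro h'; linarith
      · intro h'; linarith
    have hpart1 : ∫ s in (0:ℝ)..s₁, min ((4*π*(t-s))⁻¹) A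
        ≤ (4*π)⁻¹ * max (Real.log (4*π*c*T/ε^2)) 0 := by
      calc ∫ s in (0:ℝ)..s₁, min ((4*π*(t-s))⁻¹) A
          ≤ ∫ s in (0:ℝ)..s₁, (4*π*(t-s))⁻¹ :=
            intervalIntegral.integral_mono_on hs₁0.le I1 Iinv4 (fun s _ => min_le_left _ _)
        _ = (4*π)⁻¹ * ∫ s in (0:ℝ)..s₁, (t-s)⁻¹ := by
            rw [show (fun s : ℝ => (4*π*(t-s))⁻¹) = fun s : ℝ => (4*π)⁻¹ * (t-s)⁻¹ from
              funext fun s => mul_inv _ _]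
            exact intervalIntegral.integral_const_mul _ _
        _ = (4*π)⁻¹ * Real.log (t/u₀) := by rw [hval]
        _ ≤ (4*π)⁻¹ * max (Real.log (4*π*c*T/ε^2)) 0 := by
            apply mul_le_mul_of_nonneg_left _ (by positivity)
            have h1 : t/u₀ ≤ T/u₀ := by gcongr
            have h2 : T/u₀ = 4*π*c*T/ε^2 := by rw [hu₀def]; field_simp
            calc Real.log (t/u₀) ≤ Real.log (T/u₀) := Real.log_le_log (div_pos ht0' hu₀) h1
              _ = Real.log (4*π*c*T/ε^2) := by rw [h2]
              _ ≤ max (Real.log (4*π*c*T/ε^2)) 0 := le_max_left _ _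
    rw [hsplit]
    calc (∫ s in (0:ℝ)..s₁, min ((4*π*(t-s))⁻¹) A)
          + ∫ s in s₁..t, min ((4*π*(t-s))⁻¹) A
        ≤ (4*π)⁻¹ * max (Real.log (4*π*c*T/ε^2)) 0 + (4*π)⁻¹ := add_le_add hpart1 hpart2
      _ = (1 + max (Real.log (4*π*c*T/ε^2)) 0) / (4*π) := by field_simp; ring


open MeasureTheory Real Set

/-- Grönwall-type iteration lemma.
Fix constants `0 < b < √(2π)` and `a, c, T > 0`. There exists `ε₀ > 0` (depending only on
`b, c, T`) such that for all `ε ∈ (0, ε₀)`: if `f : [0,T] → [0,∞)` satisfies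
`f t ≤ a + (b²/log ε⁻¹) ∫₀ᵗ f s · min(1/(4π(t−s)), c/ε²) ds` for all `t ∈ [0,T]`,
then `f t ≤ a·C` on `[0,T]`, where `C > 0` depends only on `b`. -/
theorem stmt0 (b : ℝ) (hb0 : 0 < b) (hb : b < Real.sqrt (2 * Real.pi)) :
    ∃ C > (0:ℝ), ∀ c T : ℝ, 0 < c → 0 < T →
      ∃ ε₀ > (0:ℝ), ∀ ε : ℝ, ε ∈ Set.Ioo 0 ε₀ →
        ∀ a : ℝ, 0 < a → ∀ f : ℝ → ℝ,
          (∀ t ∈ Set.Icc (0:ℝ) T, 0 ≤ f t) →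
          (∀ t ∈ Set.Icc (0:ℝ) T,
            f t ≤ a + b ^ 2 / Real.log ε⁻¹ *
              ∫ s in (0:ℝ)..t, f s * min ((4 * Real.pi * (t - s))⁻¹) (c / ε ^ 2)) →
          ∀ t ∈ Set.Icc (0:ℝ) T, f t ≤ a * C := by
  have hπ : (0:ℝ) < π := Real.pi_pos
  have hb2 : b^2 < 2*π := by
    have h2π : (0:ℝ) ≤ 2*π := by positivity
    have h1 : Real.sqrt (2*π) ^ 2 = 2*π := Real.sq_sqrt h2π
    nlinarith [Real.sqrt_nonneg (2*π)]
  set θb := b^2/(2*π) with hθbdef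
  have hθb1 : θb < 1 := (div_lt_one (by positivity)).2 hb2
  have hθb0 : 0 < θb := by rw [hθbdef]; positivity
  set δ := (1 - θb)/2 with hδdef
  have hδ0 : 0 < δ := by rw [hδdef]; linarith
  have hδ1 : δ ≤ 1 := by rw [hδdef]; linarith
  refine ⟨1/δ, by positivity, ?_⟩
  intro c T hc hT
  set X := max (Real.log (4*π*c*T)) 0 with hXdef
  have hX0 : 0 ≤ X := le_max_right _ _
  set L₀ := max (b^2*(1+X)/(4*π*δ)) 1 with hL₀def
  refine ⟨Real.exp (-L₀), Real.exp_pos _, ?_⟩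
  rintro ε ⟨hε0, hεlt⟩ a ha f hf0 hineq
  set L := Real.log ε⁻¹ with hLdef
  have hLgt : L₀ < L := by
    have h1 := Real.log_lt_log hε0 hεlt
    rw [Real.log_exp] at h1
    rw [hLdef, Real.log_inv]; linarith
  have hL1 : 1 ≤ L := le_of_lt (lt_of_le_of_lt (le_max_right _ _) hLgt)
  have hL0 : 0 < L := by linarith
  set k := b^2 / L with hkdef
  have hk0 : 0 < k := by rw [hkdef]; positivity
  set A := c/ε^2 with hAdef
  have hA0 : 0 < A := by rw [hAdef]; positivity
  set J := (1 + max (Real.log (4*π*c*T/ε^2)) 0) / (4*π) with hJdef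
  have hJ0 : 0 ≤ J := by rw [hJdef]; positivity
  have hlogsplit : Real.log (4*π*c*T/ε^2) = Real.log (4*π*c*T) + 2*L := by
    rw [Real.log_div (by positivity) (by positivity), Real.log_pow, hLdef, Real.log_inv]
    push_cast; ring
  have hkJ : k * J ≤ θb + δ := by
    have hmax : max (Real.log (4*π*c*T/ε^2)) 0 ≤ X + 2*L := by
      rw [hlogsplit]
      apply max_le
      · exact add_le_add_left (le_max_left _ _) _
      · positivity
    have hL₀le : b^2*(1+X)/(4*π*δ) ≤ L := le_of_lt (lt_of_le_of_lt (le_max_left _ _) hLgt)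
    have hterm : b^2*(1+X)/(4*π*L) ≤ δ := by
      rw [div_le_iff₀ (by positivity)] at hL₀le ⊢
      nlinarith
    have heq : k * ((1 + (X + 2*L))/(4*π)) = b^2*(1+X)/(4*π*L) + θb := by
      rw [hkdef, hθbdef]; field_simp; ring
    calc k * J ≤ k * ((1 + (X + 2*L))/(4*π)) := by
          rw [hJdef]; apply mul_le_mul_of_nonneg_left _ hk0.le
          exact (div_le_div_iff_of_pos_right (by positivity)).2 (by linarith [hmax])
      _ = b^2*(1+X)/(4*π*L) + θb := heq
      _ ≤ δ + θb := add_le_add_left hterm _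
      _ = θb + δ := add_comm _ _
  set θ := θb + δ with hθdef
  have hθ1 : θ < 1 := by rw [hθdef, hδdef]; linarith
  have h1θ : 1 - θ = δ := by rw [hθdef, hδdef]; ring
  intro t ⟨ht0, htT⟩
  by_cases hInt : IntervalIntegrable
      (fun s => f s * min ((4*π*(t-s))⁻¹) A) volume 0 t
  case neg =>
    have h1 := hineq t ⟨ht0, htT⟩
    rw [intervalIntegral.integral_undef hInt] at h1
    have h2 : f t ≤ a := by rw [mul_zero, add_zero] at h1; exact h1
    have h3 : (1:ℝ) ≤ 1/δ := one_le_one_div hδ0 hδ1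
    calc f t ≤ a := h2
      _ = a * 1 := (mul_one a).symm
      _ ≤ a * (1/δ) := mul_le_mul_of_nonneg_left h3 ha.le
  case pos =>
    have hIoc : Ioc (0:ℝ) t ⊆ Icc (0:ℝ) T := fun s hs => ⟨hs.1.le, hs.2.trans htT⟩
    have hg1 : IntegrableOn (fun s => f s * min ((4*π*(t-s))⁻¹) A) (Ioc 0 t) volume := hInt.1
    have h_ae_ne : ∀ᵐ s ∂(volume.restrict (Ioc (0:ℝ) t)), s ≠ t := by
      apply ae_restrict_of_ae
      rw [ae_iff]
      simp only [ne_eq, not_not, Set.setOf_eq_eq_singleton]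
      exact measure_singleton t
    have hmemIoo : ∀ᵐ s ∂(volume.restrict (Ioc (0:ℝ) t)), s ∈ Ioc (0:ℝ) t :=
      ae_restrict_mem measurableSet_Ioc
    have hfm : AEStronglyMeasurable f (volume.restrict (Ioc (0:ℝ) t)) := by
      have heq : (fun s => (f s * min ((4*π*(t-s))⁻¹) A) * (min ((4*π*(t-s))⁻¹) A)⁻¹)
          =ᵐ[volume.restrict (Ioc (0:ℝ) t)] f := by
        filter_upwards [h_ae_ne, hmemIoo] with s hs hmem
        have hst : s < t := lt_of_le_of_ne hmem.2 hs
        have hpos : 0 < min ((4*π*(t-s))⁻¹) A := by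
          apply lt_min _ hA0
          have h4 : 0 < 4*π*(t-s) := by nlinarith
          positivity
        rw [mul_assoc, mul_inv_cancel₀ hpos.ne', mul_one]
      exact (hg1.aestronglyMeasurable.mul ((kmeas t A).inv.aestronglyMeasurable)).congr heq
    set m := min ((4*π*T)⁻¹) A with hmdef
    have hm0 : 0 < m := lt_min (by positivity) hA0
    have hft : IntegrableOn f (Ioc (0:ℝ) t) volume := by
      apply Integrable.mono' (hg1.const_mul m⁻¹) hfm
      filter_upwards [h_ae_ne, hmemIoo] with s hs hmem
      have hst : s < t := lt_of_le_of_ne hmem.2 hs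
      have hfs0 : 0 ≤ f s := hf0 s (hIoc hmem)
      have hmK : m ≤ min ((4*π*(t-s))⁻¹) A := by
        rw [hmdef]
        apply le_min _ (min_le_right _ _)
        apply le_trans (min_le_left _ _)
        apply inv_anti₀
        · have h4 : 0 < t - s := sub_pos.2 hst
          positivity
        · nlinarith [hmem.1]
      rw [Real.norm_eq_abs, abs_of_nonneg hfs0, inv_mul_eq_div, le_div_iff₀ hm0]
      exact mul_le_mul_of_nonneg_left hmK hfs0
    have hfIvl : ∀ s, 0 ≤ s → s ≤ t → IntervalIntegrable f volume 0 s := by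
      intro s hs0 hst
      rw [intervalIntegrable_iff_integrableOn_Ioc_of_le hs0]
      exact hft.mono_set (Set.Ioc_subset_Ioc_right hst)
    have hgsInt : ∀ s, 0 ≤ s → s ≤ t →
        IntervalIntegrable (fun s' => f s' * min ((4*π*(s-s'))⁻¹) A) volume 0 s := by
      intro s hs0 hst
      rw [intervalIntegrable_iff_integrableOn_Ioc_of_le hs0]
      have hfs : IntegrableOn f (Ioc (0:ℝ) s) volume :=
        hft.mono_set (Set.Ioc_subset_Ioc_right hst)
      apply Integrable.mono' (hfs.const_mul A)
        (hfs.aestronglyMeasurable.mul ((kmeas s A).aestronglyMeasurable))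
      filter_upwards [ae_restrict_mem measurableSet_Ioc] with s' hmem
      have hfs0 : 0 ≤ f s' := hf0 s' ⟨hmem.1.le, (hmem.2.trans hst).trans htT⟩
      have hK0 : 0 ≤ min ((4*π*(s-s'))⁻¹) A := by
        apply le_min _ hA0.le
        have h4 : (0:ℝ) ≤ 4*π*(s-s') := by nlinarith [hmem.2]
        positivity
      have hgoal : ‖f s' * min ((4*π*(s-s'))⁻¹) A‖ ≤ A * f s' := by
        rw [Real.norm_eq_abs, abs_of_nonneg (mul_nonneg hfs0 hK0)]
        nlinarith [min_le_right ((4*π*(s-s'))⁻¹) A]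
      exact hgoal
    have hfnonnegIoc : 0 ≤ᵐ[volume.restrict (Ioc (0:ℝ) t)] f := by
      filter_upwards [hmemIoo] with s hs
      exact hf0 s (hIoc hs)
    have hB : ∀ s ∈ Icc (0:ℝ) t, f s ≤ a + k * (A * ∫ s' in (0:ℝ)..t, f s') := by
      intro s hs
      have h1 := hineq s ⟨hs.1, hs.2.trans htT⟩
      have h2 : (∫ s' in (0:ℝ)..s, f s' * min ((4*π*(s-s'))⁻¹) A)
          ≤ A * ∫ s' in (0:ℝ)..t, f s' := by
        calc (∫ s' in (0:ℝ)..s, f s' * min ((4*π*(s-s'))⁻¹) A)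
            ≤ ∫ s' in (0:ℝ)..s, A * f s' :=
              intervalIntegral.integral_mono_on hs.1 (hgsInt s hs.1 hs.2)
                ((hfIvl s hs.1 hs.2).const_mul A)
                (fun s' hs' => by
                  have hfs0 : 0 ≤ f s' := hf0 s' ⟨hs'.1, (hs'.2.trans hs.2).trans htT⟩
                  nlinarith [min_le_right ((4*π*(s-s'))⁻¹) A])
          _ = A * ∫ s' in (0:ℝ)..s, f s' := intervalIntegral.integral_const_mul _ _
          _ ≤ A * ∫ s' in (0:ℝ)..t, f s' := by
              apply mul_le_mul_of_nonneg_left _ hA0.le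
              exact intervalIntegral.integral_mono_interval (le_refl 0) hs.1 hs.2
                hfnonnegIoc (hfIvl t ht0 (le_refl t))
      have h3 := mul_le_mul_of_nonneg_left h2 hk0.le
      linarith
    set S := sSup (f '' Icc (0:ℝ) t) with hSdef
    have hne : (f '' Icc (0:ℝ) t).Nonempty := ⟨f 0, 0, ⟨le_refl 0, ht0⟩, rfl⟩
    have hBdd : BddAbove (f '' Icc (0:ℝ) t) := by
      refine ⟨a + k * (A * ∫ s' in (0:ℝ)..t, f s'), ?_⟩
      rintro y ⟨s, hs, rfl⟩
      exact hB s hs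
    have hfS : ∀ s ∈ Icc (0:ℝ) t, f s ≤ S := fun s hs => le_csSup hBdd ⟨s, hs, rfl⟩
    have hS0 : 0 ≤ S := le_trans (hf0 0 ⟨le_refl 0, hT.le⟩) (hfS 0 ⟨le_refl 0, ht0⟩)
    have hSle : S ≤ a + θ * S := by
      apply csSup_le hne
      rintro y ⟨s, hs, rfl⟩
      have h1 := hineq s ⟨hs.1, hs.2.trans htT⟩
      have h2 : (∫ s' in (0:ℝ)..s, f s' * min ((4*π*(s-s'))⁻¹) A) ≤ S * J := by
        calc (∫ s' in (0:ℝ)..s, f s' * min ((4*π*(s-s'))⁻¹) A)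
            ≤ ∫ s' in (0:ℝ)..s, S * min ((4*π*(s-s'))⁻¹) A :=
              intervalIntegral.integral_mono_on hs.1 (hgsInt s hs.1 hs.2)
                ((kint hA0.le hs.1 (le_refl s)).const_mul S)
                (fun s' hs' => by
                  have hK0 : 0 ≤ min ((4*π*(s-s'))⁻¹) A := by
                    apply le_min _ hA0.le
                    have h4 : (0:ℝ) ≤ 4*π*(s-s') := by nlinarith [hs'.2]
                    positivity
                  exact mul_le_mul_of_nonneg_right (hfS s' ⟨hs'.1, hs'.2.trans hs.2⟩) hK0)
          _ = S * ∫ s' in (0:ℝ)..s, min ((4*π*(s-s'))⁻¹) A :=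
              intervalIntegral.integral_const_mul _ _
          _ ≤ S * J := by
              apply mul_le_mul_of_nonneg_left _ hS0
              rw [hJdef, hAdef]
              exact kernel_bound hc hε0 hT hs.1 (hs.2.trans htT)
      have h3 := mul_le_mul_of_nonneg_left h2 hk0.le
      have h5 : k * J * S ≤ θ * S := mul_le_mul_of_nonneg_right hkJ hS0
      have h4 : k * (S * J) ≤ θ * S := by
        calc k * (S * J) = k * J * S := by ring
          _ ≤ θ * S := h5
      linarith
    have hfinal : S ≤ a * (1/δ) := by
      rw [mul_one_div, le_div_iff₀ hδ0]
      have h6 : S * (1 - θ) ≤ a := by nlinarith [hSle]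
      rw [h1θ] at h6
      linarith
    exact le_trans (hfS t ⟨ht0, le_refl t⟩) hfinal
end

section
/- Let φ : ℝ² → [0,∞) be continuous, compactly supported, with ∫_{ℝ²} φ(x) dx = 1, and define R(x) := ∫_{ℝ²} φ(x+y)φ(y) dy. Define recursively h₀(t) := 1 and h_n(t) := ∫₀ᵗ h_{n−1}(s) ∫_{ℝ²} G_{t−s}(z) R(z) dz ds for n ≥ 1. Then for every T > 0 and every ε > 0 with ε² ≤ 2π‖φ‖_∞ T, one has for all n ≥ 0 and all θ ∈ [0, T/ε²]: h_n(θ) ≤ [ (1/(2π)) + (1/(2π)) log( 2π‖φ‖_∞ T / ε² ) ]ⁿ. -/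
open MeasureTheory Real Set

/-- The two-dimensional heat kernel `G_t(x) = (1/(2πt)) exp(−|x|²/(2t))`. -/
noncomputable def G (t : ℝ) (x : EuclideanSpace ℝ (Fin 2)) : ℝ :=
  (2 * Real.pi * t)⁻¹ * Real.exp (-‖x‖ ^ 2 / (2 * t))

lemma gauss_integrable {b : ℝ} (hb : 0 < b) :
    Integrable (fun x : EuclideanSpace ℝ (Fin 2) => Real.exp (-b * ‖x‖ ^ 2)) := by
  have hmp := (EuclideanSpace.volume_preserving_symm_measurableEquiv_toLp (ι := Fin 2)).symm
  rw [← hmp.integrable_comp_emb (MeasurableEquiv.measurableEmbedding _)]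
  have heq : ((fun x : EuclideanSpace ℝ (Fin 2) => Real.exp (-b * ‖x‖ ^ 2)) ∘
      (MeasurableEquiv.toLp 2 (Fin 2 → ℝ)).symm.symm)
      = fun x : Fin 2 → ℝ => ∏ i, Real.exp (-b * x i ^ 2) := by
    funext x
    simp only [Function.comp_apply, ← Real.exp_sum]
    congr 1
    have hnorm : ‖(MeasurableEquiv.toLp 2 (Fin 2 → ℝ)).symm.symm x‖ ^ 2 = ∑ i, x i ^ 2 := by
      rw [EuclideanSpace.norm_eq, Real.sq_sqrt (by positivity)]
      simp only [Real.norm_eq_abs, sq_abs]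
      rfl
    rw [hnorm, Finset.mul_sum]
  rw [heq]
  exact Integrable.fintype_prod (fun i => integrable_exp_neg_mul_sq hb)

lemma G_integrable {u : ℝ} (hu : 0 < u) : Integrable (G u) := by
  have hb : 0 < (2*u)⁻¹ := by positivity
  have h1 : G u = fun x => (2*Real.pi*u)⁻¹ * Real.exp (-(2*u)⁻¹ * ‖x‖^2) := by
    funext x; unfold G; congr 1; rw [div_eq_mul_inv]; ring
  rw [h1]
  exact (gauss_integrable hb).const_mul _

lemma G_integral {u : ℝ} (hu : 0 < u) : ∫ x, G u x = 1 := by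
  have hb : 0 < (2*u)⁻¹ := by positivity
  have h1 : G u = fun x => (2*Real.pi*u)⁻¹ * Real.exp (-(2*u)⁻¹ * ‖x‖^2) := by
    funext x; unfold G; congr 1; rw [div_eq_mul_inv]; ring
  rw [h1, integral_const_mul _ _, GaussianFourier.integral_rexp_neg_mul_sq_norm hb]
  have hfr : Module.finrank ℝ (EuclideanSpace ℝ (Fin 2)) = 2 := finrank_euclideanSpace_fin
  rw [hfr]
  norm_num
  have hpi := Real.pi_pos
  field_simp

lemma G_cont (u : ℝ) : Continuous (G u) := by
  unfold G
  exact continuous_const.mul (Real.continuous_exp.comp ((continuous_norm.pow 2).neg.div_const _))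

lemma G_nonneg {u : ℝ} (hu : 0 ≤ u) (x : EuclideanSpace ℝ (Fin 2)) : 0 ≤ G u x := by
  unfold G
  have : (0:ℝ) ≤ (2 * Real.pi * u)⁻¹ := by positivity
  exact mul_nonneg this (Real.exp_nonneg _)

lemma G_le {u : ℝ} (hu : 0 < u) (x : EuclideanSpace ℝ (Fin 2)) :
    G u x ≤ (2 * Real.pi * u)⁻¹ := by
  unfold G
  have h1 : Real.exp (-‖x‖ ^ 2 / (2 * u)) ≤ 1 := by
    rw [Real.exp_le_one_iff]
    apply div_nonpos_of_nonpos_of_nonneg (neg_nonpos.mpr (by positivity)) (by positivity)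
  calc (2 * Real.pi * u)⁻¹ * Real.exp (-‖x‖ ^ 2 / (2 * u))
      ≤ (2 * Real.pi * u)⁻¹ * 1 := by
        apply mul_le_mul_of_nonneg_left h1 (by positivity)
    _ = (2 * Real.pi * u)⁻¹ := mul_one _


/-- With `φ` and `R` as in Statement 4, define `h₀(t) := 1` and
`h_n(t) := ∫₀ᵗ h_{n−1}(s) ∫ G_{t−s}(z) R(z) dz ds` for `n ≥ 1`. Then for every `T > 0` and
every `ε > 0` with `ε² ≤ 2π‖φ‖_∞ T`, for all `n ≥ 0` and all `θ ∈ [0, T/ε²]`,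
`h_n(θ) ≤ [(1/(2π)) + (1/(2π)) log(2π‖φ‖_∞ T/ε²)]ⁿ`. -/
theorem stmt7 (φ : EuclideanSpace ℝ (Fin 2) → ℝ)
    (hφc : Continuous φ) (hφs : HasCompactSupport φ) (hφ0 : ∀ x, 0 ≤ φ x)
    (hφ1 : (∫ x, φ x) = 1)
    (R : EuclideanSpace ℝ (Fin 2) → ℝ)
    (hR : ∀ x, R x = ∫ y, φ (x + y) * φ y)
    (h : ℕ → ℝ → ℝ) (hh0 : ∀ t, h 0 t = 1)
    (hhrec : ∀ n : ℕ, ∀ t : ℝ,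
      h (n + 1) t = ∫ s in (0:ℝ)..t, h n s * ∫ z, G (t - s) z * R z)
    (T ε : ℝ) (hT : 0 < T) (hε : 0 < ε)
    (hε2 : ε ^ 2 ≤ 2 * Real.pi * (⨆ x, φ x) * T) :
    ∀ n : ℕ, ∀ θ ∈ Set.Icc (0:ℝ) (T / ε ^ 2),
      h n θ ≤ ((2 * Real.pi)⁻¹
        + (2 * Real.pi)⁻¹ * Real.log (2 * Real.pi * (⨆ x, φ x) * T / ε ^ 2)) ^ n := by
  have hpi := Real.pi_pos
  set S : ℝ := ⨆ x, φ x with hSdef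
  set M : ℝ := (2 * Real.pi)⁻¹ + (2 * Real.pi)⁻¹ * Real.log (2 * Real.pi * S * T / ε ^ 2)
    with hMdef
  -- basic facts about φ and S
  have hbdd : BddAbove (Set.range φ) := hφc.bddAbove_range_of_hasCompactSupport hφs
  have hφS : ∀ x, φ x ≤ S := fun x => le_ciSup hbdd x
  have hS0 : (0:ℝ) ≤ S := le_trans (hφ0 0) (hφS 0)
  have hφint : Integrable φ := hφc.integrable_of_hasCompactSupport hφs
  have hSpos : 0 < S := by
    rcases hS0.lt_or_eq with hlt | heq
    · exact hlt
    · exfalso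
      have hz : φ = fun _ => (0:ℝ) :=
        funext fun x => le_antisymm (heq ▸ hφS x) (hφ0 x)
      rw [hz] at hφ1
      simp at hφ1
  have hε2pos : (0:ℝ) < ε ^ 2 := by positivity
  have hlog0 : 0 ≤ Real.log (2 * Real.pi * S * T / ε ^ 2) :=
    Real.log_nonneg ((one_le_div hε2pos).mpr hε2)
  have hM0 : 0 ≤ M := by
    rw [hMdef]
    have : (0:ℝ) ≤ (2 * Real.pi)⁻¹ := by positivity
    exact add_nonneg this (mul_nonneg this hlog0)
  -- facts about R
  set ψ : EuclideanSpace ℝ (Fin 2) → ℝ := fun y => φ (-y) with hψdef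
  have hψc : Continuous ψ := hφc.comp continuous_neg
  have hψs : HasCompactSupport ψ := hφs.comp_homeomorph (Homeomorph.neg _)
  have hψint : Integrable ψ := hψc.integrable_of_hasCompactSupport hψs
  have hψ1 : (∫ y, ψ y) = 1 := by
    rw [hψdef, ← hφ1]
    exact integral_neg_eq_self φ volume
  have hRconv : R = MeasureTheory.convolution ψ φ (ContinuousLinearMap.mul ℝ ℝ) volume := by
    funext x
    rw [hR x, convolution_def]
    have h1 : (∫ y, φ (x + y) * φ y) = ∫ y, φ (x + -y) * φ (-y) :=
      (integral_neg_eq_self (fun y => φ (x + y) * φ y) volume).symm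
    rw [h1]
    congr 1
    funext t
    simp [hψdef, sub_eq_add_neg, mul_comm]
  have hRc : Continuous R := by
    rw [hRconv]
    exact hψs.continuous_convolution_left _ hψc hφint.locallyIntegrable
  have hRs : HasCompactSupport R := by
    rw [hRconv]
    exact hψs.convolution _ hφs
  have hRint : Integrable R := hRc.integrable_of_hasCompactSupport hRs
  have hR1 : (∫ x, R x) = 1 := by
    rw [hRconv, integral_convolution (ContinuousLinearMap.mul ℝ ℝ) hψint hφint, hψ1, hφ1]
    simp
  have hR0 : ∀ x, 0 ≤ R x := fun x => by
    rw [hR]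
    exact integral_nonneg fun y => mul_nonneg (hφ0 _) (hφ0 _)
  have hRleS : ∀ x, R x ≤ S := by
    intro x
    rw [hR]
    have hint1 : Integrable (fun y => φ (x + y) * φ y) := by
      have hc : Continuous (fun y => φ (x + y) * φ y) :=
        (hφc.comp (continuous_const.add continuous_id)).mul hφc
      have hs : HasCompactSupport (fun y => φ (x + y) * φ y) :=
        HasCompactSupport.mul_right (hφs.comp_homeomorph (Homeomorph.addLeft x))
      exact hc.integrable_of_hasCompactSupport hs
    calc (∫ y, φ (x + y) * φ y) ≤ ∫ y, S * φ y := by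
          apply integral_mono hint1 (hφint.const_mul S)
          intro y
          exact mul_le_mul_of_nonneg_right (hφS _) (hφ0 _)
      _ = S * ∫ y, φ y := integral_const_mul _ _
      _ = S := by rw [hφ1, mul_one]
  -- facts about the inner integral
  have hInn : ∀ u : ℝ, 0 ≤ u → 0 ≤ ∫ z, G u z * R z := by
    intro u hu
    exact integral_nonneg fun z => mul_nonneg (G_nonneg hu z) (hR0 z)
  have hImin : ∀ u : ℝ, 0 ≤ u →
      (∫ z, G u z * R z) ≤ min S ((2 * Real.pi * u)⁻¹) := by
    intro u hu
    rcases hu.lt_or_eq with hu' | hu'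
    · have hGRint : Integrable (fun z => G u z * R z) :=
        ((G_cont u).mul hRc).integrable_of_hasCompactSupport hRs.mul_left
      apply le_min
      · calc (∫ z, G u z * R z) ≤ ∫ z, G u z * S := by
              apply integral_mono hGRint ((G_integrable hu').mul_const S)
              intro z
              exact mul_le_mul_of_nonneg_left (hRleS z) (G_nonneg hu z)
          _ = (∫ z, G u z) * S := integral_mul_const _ _
          _ = S := by rw [G_integral hu', one_mul]
      · calc (∫ z, G u z * R z) ≤ ∫ z, (2 * Real.pi * u)⁻¹ * R z := by
              apply integral_mono hGRint (hRint.const_mul _)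
              intro z
              exact mul_le_mul_of_nonneg_right (G_le hu' z) (hR0 z)
          _ = (2 * Real.pi * u)⁻¹ * ∫ z, R z := integral_const_mul _ _
          _ = (2 * Real.pi * u)⁻¹ := by rw [hR1, mul_one]
    · rw [← hu']
      have hz : ∀ z : EuclideanSpace ℝ (Fin 2), G 0 z * R z = 0 := by
        intro z; unfold G; simp
      simp only [hz, integral_zero]
      exact le_min hS0 (by simp [le_refl])
  -- the majorant m
  set m : ℝ → ℝ := fun u => min S ((2 * Real.pi * u)⁻¹) with hmdef
  have hm_meas : Measurable m :=
    measurable_const.min ((measurable_const.mul measurable_id).inv)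
  have hm_nonneg : ∀ u : ℝ, 0 ≤ u → 0 ≤ m u := by
    intro u hu
    exact le_min hS0 (by positivity)
  have hm_leS : ∀ u : ℝ, m u ≤ S := fun u => min_le_left _ _
  have hmint : ∀ b : ℝ, 0 ≤ b → IntervalIntegrable m volume 0 b := by
    intro b hb
    rw [intervalIntegrable_iff, Set.uIoc_of_le hb]
    apply Integrable.mono' (g := fun _ => S)
      (integrableOn_const measure_Ioc_lt_top.ne)
      hm_meas.aestronglyMeasurable
    filter_upwards [ae_restrict_mem measurableSet_Ioc] with u hu
    rw [Real.norm_eq_abs, abs_of_nonneg (hm_nonneg u hu.1.le)]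
    exact hm_leS u
  -- the key calculus bound
  have hJ : ∀ b : ℝ, 0 ≤ b → b ≤ T / ε ^ 2 → (∫ u in (0:ℝ)..b, m u) ≤ M := by
    intro b hb0 hbT
    set a : ℝ := (2 * Real.pi * S)⁻¹ with hadef
    have ha : 0 < a := by positivity
    have haS : a * S = (2 * Real.pi)⁻¹ := by
      rw [hadef, mul_inv, mul_assoc, inv_mul_cancel₀ (ne_of_gt hSpos), mul_one]
    have hfirst : ∀ c : ℝ, 0 ≤ c → c ≤ a → (∫ u in (0:ℝ)..c, m u) ≤ (2 * Real.pi)⁻¹ := by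
      intro c hc0 hca
      calc (∫ u in (0:ℝ)..c, m u) ≤ ∫ u in (0:ℝ)..c, S := by
            apply intervalIntegral.integral_mono_on hc0 (hmint c hc0)
              intervalIntegrable_const
            intro u _
            exact hm_leS u
        _ = c * S := by simp [smul_eq_mul]
        _ ≤ a * S := mul_le_mul_of_nonneg_right hca hS0
        _ = (2 * Real.pi)⁻¹ := haS
    rcases le_or_gt b a with hba | hab
    · calc (∫ u in (0:ℝ)..b, m u) ≤ (2 * Real.pi)⁻¹ := hfirst b hb0 hba
        _ ≤ M := by
            rw [hMdef]
            exact le_add_of_nonneg_right (mul_nonneg (by positivity) hlog0)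
    · have h1 : IntervalIntegrable m volume 0 a := hmint a ha.le
      have h2 : IntervalIntegrable m volume a b := by
        apply (hmint b hb0).mono_set
        rw [Set.uIcc_of_le hb0, Set.uIcc_of_le hab.le]
        exact Set.Icc_subset_Icc ha.le le_rfl
      have hsplit : (∫ u in (0:ℝ)..b, m u)
          = (∫ u in (0:ℝ)..a, m u) + ∫ u in a..b, m u :=
        (intervalIntegral.integral_add_adjacent_intervals h1 h2).symm
      have hsecond : (∫ u in a..b, m u) ≤ (2 * Real.pi)⁻¹ * Real.log (b / a) := by
        have hcont : ContinuousOn (fun u : ℝ => (2 * Real.pi)⁻¹ * u⁻¹) (Set.uIcc a b) := by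
          apply continuousOn_const.mul
          apply ContinuousOn.inv₀ continuousOn_id
          intro u hu
          rw [Set.uIcc_of_le hab.le] at hu
          exact ne_of_gt (lt_of_lt_of_le ha hu.1)
        calc (∫ u in a..b, m u) ≤ ∫ u in a..b, (2 * Real.pi)⁻¹ * u⁻¹ := by
              apply intervalIntegral.integral_mono_on hab.le h2 hcont.intervalIntegrable
              intro u hu
              rw [hmdef]
              calc min S ((2 * Real.pi * u)⁻¹) ≤ (2 * Real.pi * u)⁻¹ := min_le_right _ _
                _ = (2 * Real.pi)⁻¹ * u⁻¹ := by rw [mul_inv]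
          _ = (2 * Real.pi)⁻¹ * ∫ u in a..b, u⁻¹ := by
              rw [intervalIntegral.integral_const_mul]
          _ = (2 * Real.pi)⁻¹ * Real.log (b / a) := by
              rw [integral_inv_of_pos ha (ha.trans hab)]
      have hlogle : Real.log (b / a) ≤ Real.log (2 * Real.pi * S * T / ε ^ 2) := by
        apply Real.log_le_log (div_pos (ha.trans hab) ha)
        rw [hadef, div_eq_mul_inv, inv_inv]
        calc b * (2 * Real.pi * S) ≤ (T / ε ^ 2) * (2 * Real.pi * S) :=
              mul_le_mul_of_nonneg_right hbT (by positivity)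
          _ = 2 * Real.pi * S * T / ε ^ 2 := by ring
      rw [hsplit, hMdef]
      apply add_le_add (hfirst a ha.le le_rfl)
      calc (∫ u in a..b, m u) ≤ (2 * Real.pi)⁻¹ * Real.log (b / a) := hsecond
        _ ≤ (2 * Real.pi)⁻¹ * Real.log (2 * Real.pi * S * T / ε ^ 2) :=
            mul_le_mul_of_nonneg_left hlogle (by positivity)
  -- the induction
  intro n
  induction n with
  | zero =>
    intro θ _
    rw [hh0]
    simp
  | succ n ih =>
    intro θ hθ
    obtain ⟨hθ0, hθT⟩ := hθ
    rw [hhrec]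
    by_cases hfi : IntervalIntegrable (fun s => h n s * ∫ z, G (θ - s) z * R z) volume 0 θ
    · have hgi : IntervalIntegrable (fun s => M ^ n * m (θ - s)) volume 0 θ := by
        have := (((hmint θ hθ0).comp_sub_left θ).symm.const_mul (M ^ n))
        simpa using this
      have hpt : ∀ s ∈ Set.Icc (0:ℝ) θ,
          h n s * (∫ z, G (θ - s) z * R z) ≤ M ^ n * m (θ - s) := by
        intro s hs
        have hu : (0:ℝ) ≤ θ - s := sub_nonneg.mpr hs.2
        have h1 : h n s ≤ M ^ n := ih s ⟨hs.1, hs.2.trans hθT⟩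
        have h2 : 0 ≤ ∫ z, G (θ - s) z * R z := hInn _ hu
        have h3 : (∫ z, G (θ - s) z * R z) ≤ m (θ - s) := hImin _ hu
        calc h n s * (∫ z, G (θ - s) z * R z)
            ≤ M ^ n * (∫ z, G (θ - s) z * R z) := mul_le_mul_of_nonneg_right h1 h2
          _ ≤ M ^ n * m (θ - s) := mul_le_mul_of_nonneg_left h3 (pow_nonneg hM0 n)
      calc (∫ s in (0:ℝ)..θ, h n s * ∫ z, G (θ - s) z * R z)
          ≤ ∫ s in (0:ℝ)..θ, M ^ n * m (θ - s) :=
            intervalIntegral.integral_mono_on hθ0 hfi hgi hpt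
        _ = M ^ n * ∫ s in (0:ℝ)..θ, m (θ - s) := intervalIntegral.integral_const_mul _ _
        _ = M ^ n * ∫ u in (0:ℝ)..θ, m u := by
            rw [intervalIntegral.integral_comp_sub_left m θ]
            simp
        _ ≤ M ^ n * M := mul_le_mul_of_nonneg_left (hJ θ hθ0 hθT) (pow_nonneg hM0 n)
        _ = M ^ (n + 1) := (pow_succ M n).symm
    · rw [intervalIntegral.integral_undef hfi]
      exact pow_nonneg hM0 (n + 1)
end

section
/- For all real numbers 0 ≤ s ≤ t and every nonzero ξ ∈ ℝ², one has ∫₀ᵗ ( e^{−(t−r)|ξ|²/2} · 1_{[0,t]}(r) − e^{−(s−r)|ξ|²/2} · 1_{[0,s]}(r) )² dr ≤ (3/2)(t−s). Equivalently, ∫₀ˢ e^{−(s−r)|ξ|²} ( e^{−(t−s)|ξ|²/2} − 1 )² dr + ∫_s^t e^{−(t−r)|ξ|²} dr ≤ (3/2)(t−s). -/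
open MeasureTheory Real Set

lemma aux_sq_le (X : ℝ) (hX : 0 ≤ X) : (Real.exp (-X) - 1) ^ 2 ≤ X := by
  have h1 : -X + 1 ≤ Real.exp (-X) := Real.add_one_le_exp _
  have h2 : Real.exp (-X) ≤ 1 := Real.exp_le_one_iff.mpr (by linarith)
  nlinarith [Real.exp_pos (-X)]

lemma aux_main (s t : ℝ) (hs : 0 ≤ s) (hst : s ≤ t) (a : ℝ) (ha : 0 < a) :
    (∫ r in (0:ℝ)..s,
        Real.exp (-(s - r) * a) * (Real.exp (-(t - s) * a / 2) - 1) ^ 2)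
        + (∫ r in s..t, Real.exp (-(t - r) * a))
      ≤ 3 / 2 * (t - s) := by
  set C : ℝ := (Real.exp (-(t - s) * a / 2) - 1) ^ 2 with hCdef
  have hC0 : 0 ≤ C := sq_nonneg _
  have hCX : C ≤ (t - s) * a / 2 := by
    have hts : (0:ℝ) ≤ t - s := sub_nonneg.mpr hst
    have := aux_sq_le ((t - s) * a / 2) (by positivity)
    have he : -(t - s) * a / 2 = -((t - s) * a / 2) := by ring
    rw [hCdef, he]
    exact this
  -- compute the first integral
  have hint1 : (∫ r in (0:ℝ)..s, Real.exp (-(s - r) * a))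
      = (1 - Real.exp (-(s * a))) / a := by
    have hfun : ∀ r : ℝ, -(s - r) * a = a * r + -(s * a) := fun r => by ring
    simp_rw [hfun]
    rw [intervalIntegral.integral_comp_mul_add Real.exp ha.ne' (-(s * a)),
      integral_exp]
    have h0 : a * s + -(s * a) = 0 := by ring
    have h0' : a * 0 + -(s * a) = -(s * a) := by ring
    rw [h0, h0', Real.exp_zero]
    simp only [smul_eq_mul]; field_simp
  have hfirst : (∫ r in (0:ℝ)..s, Real.exp (-(s - r) * a) * C)
      ≤ (t - s) / 2 := by
    rw [intervalIntegral.integral_mul_const, hint1]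
    have h1 : (1 - Real.exp (-(s * a))) / a ≤ 1 / a := by
      gcongr
      nlinarith [Real.exp_pos (-(s * a))]
    have h2 : 0 ≤ (1 - Real.exp (-(s * a))) / a := by
      have he : Real.exp (-(s * a)) ≤ 1 :=
        Real.exp_le_one_iff.mpr (by nlinarith)
      exact div_nonneg (by linarith) ha.le
    calc (1 - Real.exp (-(s * a))) / a * C ≤ (1 / a) * ((t - s) * a / 2) :=
          mul_le_mul h1 hCX hC0 (by positivity)
      _ = (t - s) / 2 := by field_simp
  have hsecond : (∫ r in s..t, Real.exp (-(t - r) * a)) ≤ t - s := by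
    have hle : ∀ r ∈ Set.Icc s t, Real.exp (-(t - r) * a) ≤ (1 : ℝ) := by
      intro r hr
      exact Real.exp_le_one_iff.mpr (by nlinarith [hr.2])
    calc (∫ r in s..t, Real.exp (-(t - r) * a)) ≤ ∫ _ in s..t, (1 : ℝ) := by
          apply intervalIntegral.integral_mono_on hst ?_ ?_ hle
          · exact (Continuous.intervalIntegrable (by fun_prop) _ _)
          · exact intervalIntegrable_const
      _ = t - s := by simp
  linarith

/-- For all `0 ≤ s ≤ t` and every nonzero `ξ ∈ ℝ²`,
`∫₀ᵗ (e^{−(t−r)|ξ|²/2} 1_{[0,t]}(r) − e^{−(s−r)|ξ|²/2} 1_{[0,s]}(r))² dr ≤ (3/2)(t−s)`;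
equivalently,
`∫₀ˢ e^{−(s−r)|ξ|²} (e^{−(t−s)|ξ|²/2} − 1)² dr + ∫ₛᵗ e^{−(t−r)|ξ|²} dr ≤ (3/2)(t−s)`. -/
theorem stmt12 (s t : ℝ) (hs : 0 ≤ s) (hst : s ≤ t)
    (ξ : EuclideanSpace ℝ (Fin 2)) (hξ : ξ ≠ 0) :
    (∫ r in (0:ℝ)..t,
        (Real.exp (-(t - r) * ‖ξ‖ ^ 2 / 2) * (Set.Icc (0:ℝ) t).indicator 1 r
          - Real.exp (-(s - r) * ‖ξ‖ ^ 2 / 2) * (Set.Icc (0:ℝ) s).indicator 1 r) ^ 2)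
      ≤ 3 / 2 * (t - s) ∧
    (∫ r in (0:ℝ)..s,
        Real.exp (-(s - r) * ‖ξ‖ ^ 2) * (Real.exp (-(t - s) * ‖ξ‖ ^ 2 / 2) - 1) ^ 2)
        + (∫ r in s..t, Real.exp (-(t - r) * ‖ξ‖ ^ 2))
      ≤ 3 / 2 * (t - s) := by
  have ha : (0:ℝ) < ‖ξ‖ ^ 2 := by
    have : ‖ξ‖ ≠ 0 := norm_ne_zero_iff.mpr hξ
    positivity
  set a : ℝ := ‖ξ‖ ^ 2 with hadef
  set F : ℝ → ℝ := fun r =>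
    (Real.exp (-(t - r) * a / 2) * (Set.Icc (0:ℝ) t).indicator 1 r
      - Real.exp (-(s - r) * a / 2) * (Set.Icc (0:ℝ) s).indicator 1 r) ^ 2 with hFdef
  have h2 := aux_main s t hs hst a ha
  -- equality of F with nice functions on the two pieces
  have heq1 : ∀ r ∈ Set.Icc (0:ℝ) s,
      F r = Real.exp (-(s - r) * a) * (Real.exp (-(t - s) * a / 2) - 1) ^ 2 := by
    intro r hr
    have h1 : (Set.Icc (0:ℝ) t).indicator (1 : ℝ → ℝ) r = 1 :=
      Set.indicator_of_mem (Set.mem_Icc.mpr ⟨hr.1, hr.2.trans hst⟩) _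
    have h2' : (Set.Icc (0:ℝ) s).indicator (1 : ℝ → ℝ) r = 1 :=
      Set.indicator_of_mem (Set.mem_Icc.mpr ⟨hr.1, hr.2⟩) _
    have hmul : Real.exp (-(t - r) * a / 2)
        = Real.exp (-(s - r) * a / 2) * Real.exp (-(t - s) * a / 2) := by
      rw [← Real.exp_add]; ring_nf
    have hsq : Real.exp (-(s - r) * a)
        = Real.exp (-(s - r) * a / 2) * Real.exp (-(s - r) * a / 2) := by
      rw [← Real.exp_add]; ring_nf
    simp only [hFdef, h1, h2', Pi.one_apply, mul_one, hmul, hsq]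
    ring
  have heq2 : ∀ r ∈ Set.Ioc s t, F r = Real.exp (-(t - r) * a) := by
    intro r hr
    have h1 : (Set.Icc (0:ℝ) t).indicator (1 : ℝ → ℝ) r = 1 :=
      Set.indicator_of_mem (Set.mem_Icc.mpr ⟨hs.trans hr.1.le, hr.2⟩) _
    have h2' : (Set.Icc (0:ℝ) s).indicator (1 : ℝ → ℝ) r = 0 :=
      Set.indicator_of_notMem (fun h => absurd h.2 (not_le.mpr hr.1)) _
    have hsq : Real.exp (-(t - r) * a)
        = Real.exp (-(t - r) * a / 2) * Real.exp (-(t - r) * a / 2) := by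
      rw [← Real.exp_add]; ring_nf
    simp only [hFdef, h1, h2', Pi.one_apply, mul_one, mul_zero, sub_zero, hsq]
    ring
  have hi1 : IntervalIntegrable F volume 0 s := by
    apply IntervalIntegrable.congr_ae
      (f := fun r => Real.exp (-(s - r) * a) * (Real.exp (-(t - s) * a / 2) - 1) ^ 2)
    · exact Continuous.intervalIntegrable (by fun_prop) _ _
    · filter_upwards [ae_restrict_mem measurableSet_uIoc] with r hr
      rw [Set.uIoc_of_le hs] at hr
      exact (heq1 r ⟨hr.1.le, hr.2⟩).symm
  have hi2 : IntervalIntegrable F volume s t := by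
    apply IntervalIntegrable.congr_ae (f := fun r => Real.exp (-(t - r) * a))
    · exact Continuous.intervalIntegrable (by fun_prop) _ _
    · filter_upwards [ae_restrict_mem measurableSet_uIoc] with r hr
      rw [Set.uIoc_of_le hst] at hr
      exact (heq2 r hr).symm
  have hsplit : (∫ r in (0:ℝ)..t, F r) = (∫ r in (0:ℝ)..s, F r) + ∫ r in s..t, F r :=
    (intervalIntegral.integral_add_adjacent_intervals hi1 hi2).symm
  have e1 : (∫ r in (0:ℝ)..s, F r)
      = ∫ r in (0:ℝ)..s, Real.exp (-(s - r) * a) * (Real.exp (-(t - s) * a / 2) - 1) ^ 2 := by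
    apply intervalIntegral.integral_congr
    intro r hr
    rw [Set.uIcc_of_le hs] at hr
    exact heq1 r hr
  have e2 : (∫ r in s..t, F r) = ∫ r in s..t, Real.exp (-(t - r) * a) := by
    apply intervalIntegral.integral_congr_ae
    filter_upwards with r hr
    rw [Set.uIoc_of_le hst] at hr
    exact heq2 r hr
  constructor
  · show (∫ r in (0:ℝ)..t, F r) ≤ 3 / 2 * (t - s)
    rw [hsplit, e1, e2]; exact h2
  · exact h2
end
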